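/- For every c ∈ m_C, the principal ideal generated by X − c in O_C[[X]] is a prime ideal, and the localization of O_C[[X]] at this prime ideal is a discrete valuation ring. -/

import Mathlib

/-!
STATEMENT 2: For every `c ∈ m_C`, the principal ideal `(X - c)` of `O_C[[X]]` is prime, and
the localization of `O_C[[X]]` at this prime is a discrete valuation ring.
-/

noncomputable section

/-- The valuation ring `O_C = {x : C | ‖x‖ ≤ 1}` of a nonarchimedean normed field. -/
def OC (C : Type) [NormedField C] (hna : IsNonarchimedean (norm : C → ℝ)) : Subring C where
  carrier := {x : C | ‖x‖ ≤ 1}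
  mul_mem' := fun {a b} (ha : ‖a‖ ≤ 1) (hb : ‖b‖ ≤ 1) => by
    have : ‖a * b‖ = ‖a‖ * ‖b‖ := norm_mul a b
    simp only [Set.mem_setOf_eq, this]
    nlinarith [norm_nonneg a, norm_nonneg b]
  one_mem' := by simp
  add_mem' := fun {a b} (ha : ‖a‖ ≤ 1) (hb : ‖b‖ ≤ 1) =>
    le_trans (hna a b) (max_le ha hb)
  zero_mem' := by simp
  neg_mem' := fun {a} (ha : ‖a‖ ≤ 1) => by simpa using ha

set_option linter.unusedSectionVars false

namespace S2Aux

open PowerSeries Finset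

variable {K : Type} [NontriviallyNormedField K] [CompleteSpace K]
  (hna : IsNonarchimedean (norm : K → ℝ)) (c : OC K hna)

local notation "𝒪" => OC K hna

include hna

theorem norm_coe_le_one (x : OC K hna) : ‖(x : K)‖ ≤ 1 := x.2

theorem norm_sum_le {ι : Type*} (s : Finset ι) (x : ι → K) {B : ℝ} (hB : 0 ≤ B)
    (h : ∀ i ∈ s, ‖x i‖ ≤ B) : ‖∑ i ∈ s, x i‖ ≤ B := by
  classical
  induction s using Finset.induction with
  | empty => simpa using hB
  | insert a s hnot ih =>
    rw [Finset.sum_insert hnot]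
    exact le_trans (hna _ _) (max_le (h a (mem_insert_self a s))
      (ih fun i hi => h i (mem_insert_of_mem hi)))

variable (hc : ‖(c : K)‖ < 1)
include hc

theorem summable_norm_aux (a : ℕ → OC K hna) :
    Summable fun n => ‖(a n : K) * (c : K) ^ n‖ := by
  refine Summable.of_nonneg_of_le (fun _ => norm_nonneg _) (fun n => ?_)
    (summable_geometric_of_lt_one (norm_nonneg (c : K)) hc)
  rw [norm_mul, norm_pow]
  calc ‖(a n : K)‖ * ‖(c : K)‖ ^ n ≤ 1 * ‖(c : K)‖ ^ n :=
        mul_le_mul_of_nonneg_right (norm_coe_le_one hna (a n)) (pow_nonneg (norm_nonneg _) n)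
    _ = ‖(c : K)‖ ^ n := one_mul _

theorem summable_aux (a : ℕ → OC K hna) :
    Summable fun n => (a n : K) * (c : K) ^ n :=
  (summable_norm_aux hna c hc a).of_norm

/-- Evaluation of a power series over `O_C` at the point `c`. -/
def ev (f : PowerSeries 𝒪) : K :=
  ∑' n, ((PowerSeries.coeff (R := 𝒪) n f : K) * (c : K) ^ n)

theorem ev_mul (f g : PowerSeries (OC K hna)) :
    ev hna c (f * g) = ev hna c f * ev hna c g := by
  unfold ev
  rw [tsum_mul_tsum_eq_tsum_sum_antidiagonal_of_summable_norm
    (summable_norm_aux hna c hc fun n => coeff (R := 𝒪) n f)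
    (summable_norm_aux hna c hc fun n => coeff (R := 𝒪) n g)]
  refine tsum_congr fun n => ?_
  rw [PowerSeries.coeff_mul]
  push_cast
  rw [Finset.sum_mul]
  refine Finset.sum_congr rfl fun kl hkl => ?_
  rw [← Finset.HasAntidiagonal.mem_antidiagonal.mp hkl, pow_add]
  ring

theorem ev_pi : ev hna c (X - PowerSeries.C (R := OC K hna) c) = 0 := by
  unfold ev
  rw [tsum_eq_sum (s := ({0, 1} : Finset ℕ)) (fun b hb => ?_)]
  · have h0 : (0 : ℕ) ∉ ({1} : Finset ℕ) := by decide
    rw [Finset.sum_insert h0, Finset.sum_singleton]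
    simp [PowerSeries.coeff_X, PowerSeries.coeff_C]
  · have hb0 : b ≠ 0 := fun h => hb (by simp [h])
    have hb1 : b ≠ 1 := fun h => hb (by simp [h])
    simp [PowerSeries.coeff_X, PowerSeries.coeff_C, hb0, hb1]

theorem ev_one : ev hna c 1 = 1 := by
  unfold ev
  rw [tsum_eq_single 0 (fun b hb => ?_)]
  · simp
  · simp [PowerSeries.coeff_one, hb]


theorem tsum_shift (a : ℕ → 𝒪) (m : ℕ) :
    (∑' j, ((a (m + j) : K) * (c : K) ^ j))
      = (a m : K) + (c : K) * ∑' j, ((a (m + 1 + j) : K) * (c : K) ^ j) := by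
  rw [Summable.tsum_eq_zero_add (summable_aux hna c hc fun j => a (m + j))]
  congr 1
  · simp
  · rw [← tsum_mul_left]
    refine tsum_congr fun j => ?_
    rw [show m + (j + 1) = m + 1 + j by omega, pow_succ']
    ring

theorem dvd_of_ev_eq_zero (f : PowerSeries 𝒪) (hf : ev hna c f = 0) :
    (X - PowerSeries.C (R := 𝒪) c) ∣ f := by
  have hmem : ∀ k : ℕ, (∑' j, ((coeff (R := 𝒪) (k + 1 + j) f : K) * (c : K) ^ j)) ∈ OC K hna := by
    intro k
    have hsum := summable_aux hna c hc (fun j => coeff (R := 𝒪) (k + 1 + j) f)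
    refine (isClosed_le continuous_norm continuous_const).mem_of_tendsto hsum.hasSum
      (Filter.Eventually.of_forall fun s => ?_)
    refine norm_sum_le hna s _ zero_le_one fun j _ => ?_
    rw [norm_mul, norm_pow]
    exact mul_le_one₀ (norm_coe_le_one hna _) (by positivity)
      (pow_le_one₀ (norm_nonneg _) hc.le)
  set q : PowerSeries 𝒪 := PowerSeries.mk fun k =>
    (⟨∑' j, ((coeff (R := 𝒪) (k + 1 + j) f : K) * (c : K) ^ j), hmem k⟩ : 𝒪) with hq
  have hqco : ∀ k : ℕ, ((coeff (R := 𝒪) k q : K)) = ∑' j, ((coeff (R := 𝒪) (k + 1 + j) f : K) * (c : K) ^ j) := by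
    intro k; rw [hq, PowerSeries.coeff_mk]
  refine ⟨q, ?_⟩
  have hrw : (X - PowerSeries.C (R := 𝒪) c) * q = q * X - q * PowerSeries.C (R := 𝒪) c := by ring
  ext n
  rw [hrw, map_sub, PowerSeries.coeff_mul_C]
  cases n with
  | zero =>
    rw [PowerSeries.coeff_zero_mul_X]
    have h0' := tsum_shift hna c hc (fun j => coeff (R := 𝒪) j f) 0
    simp only [zero_add] at h0'
    have hq0 : ((coeff (R := 𝒪) 0 q : K)) = ∑' j, ((coeff (R := 𝒪) (1 + j) f : K) * (c : K) ^ j) := by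
      have := hqco 0
      simpa using this
    rw [← hq0] at h0'
    have h0 : ev hna c f = (coeff (R := 𝒪) 0 f : K) + (c : K) * (coeff (R := 𝒪) 0 q : K) := h0'
    rw [hf] at h0
    push_cast
    linear_combination -h0
  | succ n =>
    rw [PowerSeries.coeff_succ_mul_X]
    have h1 : ((coeff (R := 𝒪) n q : K)) = (coeff (R := 𝒪) (n + 1) f : K) + (c : K) * (coeff (R := 𝒪) (n + 1) q : K) := by
      rw [hqco n, hqco (n + 1)]
      exact tsum_shift hna c hc (fun j => coeff (R := 𝒪) j f) (n + 1)
    push_cast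
    linear_combination -h1

theorem ev_eq_zero_of_dvd (f : PowerSeries 𝒪) (h : (X - PowerSeries.C (R := 𝒪) c) ∣ f) :
    ev hna c f = 0 := by
  obtain ⟨g, rfl⟩ := h
  rw [ev_mul hna c hc, ev_pi hna c hc, zero_mul]

theorem prime_pi : Prime (X - PowerSeries.C (R := 𝒪) c) := by
  refine ⟨?_, ?_, ?_⟩
  · intro h
    have := congrArg (coeff (R := 𝒪) 1) h
    simp [PowerSeries.coeff_X, PowerSeries.coeff_C] at this
  · intro h
    obtain ⟨u, hu⟩ := h
    have h1 : (u : PowerSeries 𝒪) * (u⁻¹ : Units (PowerSeries 𝒪)) = 1 := u.mul_inv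
    have := congrArg (ev hna c) h1
    rw [ev_mul hna c hc, ev_one hna c hc, hu, ev_pi hna c hc, zero_mul] at this
    exact zero_ne_one this
  · intro a b hab
    have h0 : ev hna c (a * b) = 0 := ev_eq_zero_of_dvd hna c hc _ hab
    rw [ev_mul hna c hc] at h0
    rcases mul_eq_zero.mp h0 with h | h
    · exact Or.inl (dvd_of_ev_eq_zero hna c hc a h)
    · exact Or.inr (dvd_of_ev_eq_zero hna c hc b h)


theorem coeff_pow_bound (n k : ℕ) :
    ‖((coeff (R := 𝒪) k ((X - PowerSeries.C (R := 𝒪) c) ^ n) : K))‖ ≤ ‖(c : K)‖ ^ (n - k) := by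
  induction n generalizing k with
  | zero =>
    cases k with
    | zero => simpa using norm_coe_le_one hna _
    | succ k => simpa using norm_coe_le_one hna _
  | succ n ih =>
    have hexp : (X - PowerSeries.C (R := 𝒪) c) ^ (n + 1)
        = (X - PowerSeries.C (R := 𝒪) c) ^ n * X - (X - PowerSeries.C (R := 𝒪) c) ^ n * PowerSeries.C (R := 𝒪) c := by
      ring
    rw [hexp, map_sub, PowerSeries.coeff_mul_C]
    have hsub : ∀ x y : K, ‖x - y‖ ≤ max ‖x‖ ‖y‖ := fun x y => by
      have := hna x (-y)
      simpa [sub_eq_add_neg] using this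
    cases k with
    | zero =>
      rw [PowerSeries.coeff_zero_mul_X]
      push_cast
      rw [zero_sub, norm_neg, norm_mul]
      calc ‖((coeff (R := 𝒪) 0 ((X - PowerSeries.C (R := 𝒪) c) ^ n) : K))‖ * ‖(c : K)‖
          ≤ ‖(c : K)‖ ^ (n - 0) * ‖(c : K)‖ :=
            mul_le_mul_of_nonneg_right (ih 0) (norm_nonneg _)
        _ = ‖(c : K)‖ ^ (n + 1) := by rw [Nat.sub_zero, ← pow_succ]
    | succ k =>
      rw [PowerSeries.coeff_succ_mul_X]
      push_cast
      refine le_trans (hsub _ _) (max_le ?_ ?_)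
      · exact ih k
      · rw [norm_mul]
        calc ‖((coeff (R := 𝒪) (k + 1) ((X - PowerSeries.C (R := 𝒪) c) ^ n) : K))‖ * ‖(c : K)‖
            ≤ ‖(c : K)‖ ^ (n - (k + 1)) * ‖(c : K)‖ ^ 1 := by
              refine mul_le_mul (ih (k + 1)) (by simpa using le_refl ‖(c : K)‖)
                (norm_nonneg _) (by positivity)
          _ = ‖(c : K)‖ ^ (n - (k + 1) + 1) := by rw [← pow_add]
          _ ≤ ‖(c : K)‖ ^ (n - k) :=
              pow_le_pow_of_le_one (norm_nonneg _) hc.le (by omega)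

theorem coeff_bound (f g : PowerSeries 𝒪) (n j : ℕ)
    (hfg : f = (X - PowerSeries.C (R := 𝒪) c) ^ n * g) (hj : j < n) :
    ‖((coeff (R := 𝒪) j f : K))‖ ≤ ‖(c : K)‖ ^ (n - j) := by
  rw [hfg, PowerSeries.coeff_mul]
  rw [show (((∑ p ∈ Finset.HasAntidiagonal.antidiagonal j,
        coeff (R := 𝒪) p.1 ((X - PowerSeries.C (R := 𝒪) c) ^ n) * coeff (R := 𝒪) p.2 g : 𝒪)) : K)
      = ∑ p ∈ Finset.HasAntidiagonal.antidiagonal j,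
        ((coeff (R := 𝒪) p.1 ((X - PowerSeries.C (R := 𝒪) c) ^ n) : K)) * ((coeff (R := 𝒪) p.2 g : K)) by push_cast; rfl]
  refine norm_sum_le hna _ _ (by positivity) fun p hp => ?_
  have hp1 : p.1 ≤ j := Finset.HasAntidiagonal.antidiagonal.fst_le hp
  rw [norm_mul]
  calc ‖((coeff (R := 𝒪) p.1 ((X - PowerSeries.C (R := 𝒪) c) ^ n) : K))‖ * ‖((coeff (R := 𝒪) p.2 g : K))‖
      ≤ ‖(c : K)‖ ^ (n - p.1) * 1 :=
        mul_le_mul (coeff_pow_bound hna c hc n p.1) (norm_coe_le_one hna _)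
          (norm_nonneg _) (by positivity)
    _ = ‖(c : K)‖ ^ (n - p.1) := mul_one _
    _ ≤ ‖(c : K)‖ ^ (n - j) := pow_le_pow_of_le_one (norm_nonneg _) hc.le (by omega)

theorem eq_zero_of_forall_pow_dvd (f : PowerSeries 𝒪)
    (h : ∀ n : ℕ, (X - PowerSeries.C (R := 𝒪) c) ^ n ∣ f) : f = 0 := by
  ext j
  have hb : ∀ m : ℕ, ‖((coeff (R := 𝒪) j f : K))‖ ≤ ‖(c : K)‖ ^ m := by
    intro m
    obtain ⟨g, hg⟩ := h (j + 1 + m)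
    calc ‖((coeff (R := 𝒪) j f : K))‖ ≤ ‖(c : K)‖ ^ (j + 1 + m - j) :=
          coeff_bound hna c hc f g (j + 1 + m) j hg (by omega)
      _ ≤ ‖(c : K)‖ ^ m :=
          pow_le_pow_of_le_one (norm_nonneg _) hc.le (by omega)
  have hz : ‖((coeff (R := 𝒪) j f : K))‖ = 0 := by
    by_contra hne
    have hpos : 0 < ‖((coeff (R := 𝒪) j f : K))‖ := lt_of_le_of_ne (norm_nonneg _) (Ne.symm hne)
    obtain ⟨m, hm⟩ := exists_pow_lt_of_lt_one hpos hc
    exact absurd (hb m) (not_le.mpr hm)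
  have : ((coeff (R := 𝒪) j f : K)) = 0 := norm_eq_zero.mp hz
  simpa using Subtype.ext this

theorem exists_order (f : PowerSeries 𝒪) (hf : f ≠ 0) :
    ∃ n : ℕ, (X - PowerSeries.C (R := 𝒪) c) ^ n ∣ f ∧ ¬ (X - PowerSeries.C (R := 𝒪) c) ^ (n + 1) ∣ f := by
  classical
  have hne : ∃ n : ℕ, ¬ (X - PowerSeries.C (R := 𝒪) c) ^ n ∣ f := by
    by_contra h
    push_neg at h
    exact hf (eq_zero_of_forall_pow_dvd hna c hc f h)
  set n := Nat.find hne with hn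
  have hspec : ¬ (X - PowerSeries.C (R := 𝒪) c) ^ n ∣ f := Nat.find_spec hne
  have hn0 : n ≠ 0 := by
    intro h
    rw [h, pow_zero] at hspec
    exact hspec (one_dvd f)
  refine ⟨n - 1, ?_, ?_⟩
  · have := Nat.find_min hne (show n - 1 < n by omega)
    exact not_not.mp this
  · rw [show n - 1 + 1 = n by omega]
    exact hspec

end S2Aux

theorem statement2 (p : ℕ) [Fact p.Prime] (C : Type) [NontriviallyNormedField C]
    [IsAlgClosed C] [CharP C p] [CompleteSpace C]
    (hna : IsNonarchimedean (norm : C → ℝ))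
    (c : OC C hna) (hc : ‖(c : C)‖ < 1) :
    ∃ hP : (Ideal.span {PowerSeries.X - PowerSeries.C (R := OC C hna) c}).IsPrime,
      IsDiscreteValuationRing
        (Localization.AtPrime (Ideal.span {PowerSeries.X - PowerSeries.C (R := OC C hna) c})
          (hp := hP)) := by
  set π : PowerSeries (OC C hna) := PowerSeries.X - PowerSeries.C (R := OC C hna) c with hπdef
  have hprime : Prime π := S2Aux.prime_pi hna c hc
  have hπ0 : π ≠ 0 := hprime.1
  have hP : (Ideal.span {π}).IsPrime := (Ideal.span_singleton_prime hπ0).mpr hprime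
  refine ⟨hP, ?_⟩
  haveI := hP
  letI SS := Localization.AtPrime (Ideal.span {π})
  haveI : IsDomain (Localization.AtPrime (Ideal.span {π})) := IsLocalization.isDomain_of_local_atPrime hP
  have hinj : Function.Injective (algebraMap (PowerSeries (OC C hna)) (Localization.AtPrime (Ideal.span {π}))) :=
    IsLocalization.injective (Localization.AtPrime (Ideal.span {π})) (Ideal.primeCompl_le_nonZeroDivisors (Ideal.span {π}))
  set π' : (Localization.AtPrime (Ideal.span {π})) := algebraMap (PowerSeries (OC C hna)) (Localization.AtPrime (Ideal.span {π})) π with hπ'def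
  have hπ'0 : π' ≠ 0 := fun h => hπ0 (hinj (h.trans (map_zero _).symm))
  have hπmem : π ∈ (Ideal.span {π}) := Ideal.mem_span_singleton_self π
  have hπ'nu : ¬ IsUnit π' := fun h =>
    (IsLocalization.AtPrime.isUnit_to_map_iff (Localization.AtPrime (Ideal.span {π})) (Ideal.span {π}) π).mp h hπmem
  have hmax : IsLocalRing.maximalIdeal (Localization.AtPrime (Ideal.span {π})) = Ideal.span {π'} := by
    rw [← Localization.AtPrime.map_eq_maximalIdeal, Ideal.map_span,
      Set.image_singleton]
  have hirr : Irreducible π' := by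
    refine ⟨hπ'nu, fun a b hab => ?_⟩
    by_contra hcon
    push_neg at hcon
    obtain ⟨ha, hb⟩ := hcon
    have haM : a ∈ IsLocalRing.maximalIdeal (Localization.AtPrime (Ideal.span {π})) := (IsLocalRing.mem_maximalIdeal a).mpr ha
    have hbM : b ∈ IsLocalRing.maximalIdeal (Localization.AtPrime (Ideal.span {π})) := (IsLocalRing.mem_maximalIdeal b).mpr hb
    rw [hmax, Ideal.mem_span_singleton] at haM hbM
    obtain ⟨a', rfl⟩ := haM
    obtain ⟨b', rfl⟩ := hbM
    have hstep : π' * 1 = π' * (π' * (a' * b')) := by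
      rw [mul_one]
      conv_lhs => rw [hab]
      ring
    have h1 : (1 : Localization.AtPrime (Ideal.span {π})) = π' * (a' * b') := mul_left_cancel₀ hπ'0 hstep
    exact hπ'nu (IsUnit.of_mul_eq_one _ h1.symm)
  refine IsDiscreteValuationRing.ofHasUnitMulPowIrreducibleFactorization ⟨π', hirr, ?_⟩
  intro x hx
  obtain ⟨⟨r, s⟩, hmk : IsLocalization.mk' (Localization.AtPrime (Ideal.span {π})) r s = x⟩ := IsLocalization.mk'_surjective (Ideal.span {π}).primeCompl x
  have hr0 : r ≠ 0 := by
    rintro rfl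
    rw [IsLocalization.mk'_zero] at hmk
    exact hx hmk.symm
  obtain ⟨n, ⟨g, hg⟩, hnd⟩ := S2Aux.exists_order hna c hc r hr0
  rw [← hπdef] at hg hnd
  have hgP : g ∉ (Ideal.span {π}) := by
    intro hgP
    rw [Ideal.mem_span_singleton] at hgP
    obtain ⟨g', rfl⟩ := hgP
    exact hnd ⟨g', by rw [hg]; ring⟩
  have hu1 : IsUnit (algebraMap (PowerSeries (OC C hna)) (Localization.AtPrime (Ideal.span {π})) g) :=
    IsLocalization.map_units (Localization.AtPrime (Ideal.span {π})) (⟨g, hgP⟩ : (Ideal.span {π}).primeCompl)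
  have hu2 : IsUnit (IsLocalization.mk' (Localization.AtPrime (Ideal.span {π})) (1 : PowerSeries (OC C hna)) s) :=
    IsUnit.of_mul_eq_one (algebraMap (PowerSeries (OC C hna)) (Localization.AtPrime (Ideal.span {π})) s)
      (by rw [IsLocalization.mk'_spec, map_one])
  refine ⟨n, (hu1.unit * hu2.unit : (Localization.AtPrime (Ideal.span {π}))ˣ), ?_⟩
  have hcoe : ((hu1.unit * hu2.unit : (Localization.AtPrime (Ideal.span {π}))ˣ) : (Localization.AtPrime (Ideal.span {π})))
      = algebraMap (PowerSeries (OC C hna)) (Localization.AtPrime (Ideal.span {π})) g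
        * IsLocalization.mk' (Localization.AtPrime (Ideal.span {π})) (1 : PowerSeries (OC C hna)) s := by
    simp
  have key : IsLocalization.mk' (Localization.AtPrime (Ideal.span {π})) (π ^ n * g) s
      = algebraMap (PowerSeries (OC C hna)) (Localization.AtPrime (Ideal.span {π})) (π ^ n * g)
        * IsLocalization.mk' (Localization.AtPrime (Ideal.span {π})) 1 s :=
    IsLocalization.mk'_eq_mul_mk'_one _ _
  rw [← hmk, hg, key, map_mul, map_pow, hcoe]
  ring
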